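/- Program equivalence: a contract (s,p) is optimal if and only if p = p*(s), s satisfies (BE), and s_1 is maximal subject to the constraints, i.e. for every nondecreasing sequence s′ : ℕ → [0,1] with s′_0 = 0 satisfying (BE), one has s′_1 ≤ s_1. -/

import Mathlib

open Set Filter

/-- Principal's continuation value `Π_t(s,p) = Σ_{τ=t}^∞ δ^{τ−t}(π(s_τ) − p_τ)`. -/
noncomputable def PiVal (δ : ℝ) (π : ℝ → ℝ) (s p : ℕ → ℝ) (t : ℕ) : ℝ :=
  ∑' k : ℕ, δ ^ k * (π (s (t + k)) - p (t + k))

/-- Expert's continuation value `W_t(s,p) = Σ_{τ=t}^∞ δ^{τ−t}(w(s_τ) + p_τ)`. -/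
noncomputable def WVal (δ : ℝ) (w : ℝ → ℝ) (s p : ℕ → ℝ) (t : ℕ) : ℝ :=
  ∑' k : ℕ, δ ^ k * (w (s (t + k)) + p (t + k))

/-- A contract: `s` takes values in `[0,1]`, `s 0 = 0`, and `t ↦ δ^t·p_t` is summable. -/
def IsContract (δ : ℝ) (s p : ℕ → ℝ) : Prop :=
  (∀ t, s t ∈ Set.Icc (0 : ℝ) 1) ∧ s 0 = 0 ∧ Summable fun t => δ ^ t * p t

/-- Implementability: feasibility (monotone `s`, nonnegative `p`) plus (P-IC) and (E-IC). -/
def Implementable (δ : ℝ) (π w : ℝ → ℝ) (s p : ℕ → ℝ) : Prop :=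
  IsContract δ s p ∧ Monotone s ∧ (∀ t, 0 ≤ p t) ∧
  (∀ t, π (s t) / (1 - δ) ≤ PiVal δ π s p t) ∧
  (∀ t, w (s t) / (1 - δ) ≤ WVal δ w s p (t + 1))

/-- An optimal contract maximizes the principal's time-0 profit among implementable contracts. -/
def Optimal (δ : ℝ) (π w : ℝ → ℝ) (s p : ℕ → ℝ) : Prop :=
  Implementable δ π w s p ∧
  ∀ s' p' : ℕ → ℝ, Implementable δ π w s' p' → PiVal δ π s' p' 0 ≤ PiVal δ π s p 0

/-- The break-even condition (BE): `δ·(π(s_{t+1}) − π(s_t)) = w(s_{t−1}) − w(s_t)` for every `t ≥ 1`. -/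
def BE (δ : ℝ) (π w : ℝ → ℝ) (s : ℕ → ℝ) : Prop :=
  ∀ t : ℕ, 1 ≤ t → δ * (π (s (t + 1)) - π (s t)) = w (s (t - 1)) - w (s t)

/-- The frontloaded payment scheme `p*(s)`: `p*_0 = 0`, `p*_t = (w(s_{t−1}) − w(s_t))/(1−δ)` for `t ≥ 1`. -/
noncomputable def payStar (δ : ℝ) (w : ℝ → ℝ) (s : ℕ → ℝ) (t : ℕ) : ℝ :=
  if t = 0 then 0 else (w (s (t - 1)) - w (s t)) / (1 - δ)

section SeriesTools
variable {δ : ℝ}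

lemma sum_pow_mul_of_bounded (h0 : 0 ≤ δ) (h1 : δ < 1) {f : ℕ → ℝ} {C : ℝ}
    (hf : ∀ k, |f k| ≤ C) : Summable fun k => δ ^ k * f k := by
  apply Summable.of_norm_bounded
    (((summable_geometric_of_lt_one h0 h1)).mul_right C)
  intro k
  rw [Real.norm_eq_abs, abs_mul, abs_pow, abs_of_nonneg h0]
  exact mul_le_mul_of_nonneg_left (hf k) (pow_nonneg h0 k)

lemma tsum_pow_mul_bound (h0 : 0 ≤ δ) (h1 : δ < 1) {f : ℕ → ℝ} {C : ℝ}
    (hf : ∀ k, |f k| ≤ C) : |∑' k : ℕ, δ ^ k * f k| ≤ C / (1 - δ) := by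
  have hC : 0 ≤ C := le_trans (abs_nonneg _) (hf 0)
  have h2 : Summable fun k => ‖δ ^ k * f k‖ := by
    apply Summable.of_nonneg_of_le (fun k => norm_nonneg _) (fun k => ?_)
      (((summable_geometric_of_lt_one h0 h1)).mul_right C)
    rw [Real.norm_eq_abs, abs_mul, abs_pow, abs_of_nonneg h0]
    exact mul_le_mul_of_nonneg_left (hf k) (pow_nonneg h0 k)
  calc |∑' k : ℕ, δ ^ k * f k| ≤ ∑' k : ℕ, ‖δ ^ k * f k‖ := norm_tsum_le_tsum_norm h2
    _ ≤ ∑' k : ℕ, δ ^ k * C := by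
        apply Summable.tsum_le_tsum _ h2 (((summable_geometric_of_lt_one h0 h1)).mul_right C)
        intro k
        rw [Real.norm_eq_abs, abs_mul, abs_pow, abs_of_nonneg h0]
        exact mul_le_mul_of_nonneg_left (hf k) (pow_nonneg h0 k)
    _ = C / (1 - δ) := by
        rw [tsum_mul_right, tsum_geometric_of_lt_one h0 h1, div_eq_inv_mul, mul_comm]

lemma tsum_shift_rec {f : ℕ → ℝ} {t : ℕ}
    (hs : Summable fun k => δ ^ k * f (t + k)) :
    ∑' k : ℕ, δ ^ k * f (t + k) = f t + δ * ∑' k : ℕ, δ ^ k * f ((t + 1) + k) := by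
  rw [Summable.tsum_eq_zero_add hs]
  simp only [pow_zero, one_mul, add_zero]
  congr 1
  have : ∀ k : ℕ, δ ^ (k + 1) * f (t + (k + 1)) = δ * (δ ^ k * f ((t + 1) + k)) := by
    intro k
    rw [pow_succ]
    ring_nf
  rw [tsum_congr this, tsum_mul_left]

lemma shift_summable (h0 : 0 < δ) {p : ℕ → ℝ} (hp : Summable fun t => δ ^ t * p t) (t : ℕ) :
    Summable fun k => δ ^ k * p (t + k) := by
  have h1 : Summable fun k => δ ^ (k + t) * p (k + t) := (summable_nat_add_iff t).2 hp
  have h2 := h1.mul_left ((δ ^ t)⁻¹)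
  apply h2.congr
  intro k
  have hne : (δ : ℝ) ^ t ≠ 0 := pow_ne_zero _ (ne_of_gt h0)
  rw [pow_add]
  field_simp
  rw [add_comm t k]

lemma decay_zero (h0 : 0 < δ) (h1 : δ < 1) {φ : ℕ → ℝ} {C : ℝ}
    (hb : ∀ t, |φ t| ≤ C) (hr : ∀ t, φ t = δ * φ (t + 1)) : ∀ t, φ t = 0 := by
  have key : ∀ t k : ℕ, φ t = δ ^ k * φ (t + k) := by
    intro t k
    induction k with
    | zero => simp
    | succ n ih =>
      rw [ih, hr (t + n), pow_succ]
      ring_nf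
  intro t
  have hle : ∀ k : ℕ, |φ t| ≤ δ ^ k * C := by
    intro k
    rw [key t k, abs_mul, abs_pow, abs_of_nonneg h0.le]
    exact mul_le_mul_of_nonneg_left (hb _) (pow_nonneg h0.le k)
  have hlim : Tendsto (fun k : ℕ => δ ^ k * C) atTop (nhds 0) := by
    simpa using (tendsto_pow_atTop_nhds_zero_of_lt_one h0.le h1).mul_const C
  have : |φ t| ≤ 0 := ge_of_tendsto' hlim hle
  have := abs_nonneg (φ t)
  have : |φ t| = 0 := le_antisymm ‹|φ t| ≤ 0› ‹0 ≤ |φ t|›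
  exact abs_eq_zero.1 this

end SeriesTools

/-- Total surplus value `S_t = Σ δ^k (π+w)(u_{t+k})`. -/
noncomputable def Sval (δ : ℝ) (π w : ℝ → ℝ) (u : ℕ → ℝ) (t : ℕ) : ℝ :=
  ∑' k : ℕ, δ ^ k * (π (u (t + k)) + w (u (t + k)))

/-- The relaxed feasible set. -/
def Feas (δ : ℝ) (π w : ℝ → ℝ) (u : ℕ → ℝ) : Prop :=
  (∀ t, u t ∈ Set.Icc (0 : ℝ) 1) ∧ u 0 = 0 ∧ Monotone u ∧
  ∀ t : ℕ, (π (u (t + 1)) + w (u t)) / (1 - δ) ≤ Sval δ π w u (t + 1)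

section ValueTools
variable {δ : ℝ} {π w : ℝ → ℝ} {u p : ℕ → ℝ}

lemma exists_icc_bound (hπc : ContinuousOn π (Set.Icc 0 1)) (hwc : ContinuousOn w (Set.Icc 0 1)) :
    ∃ C : ℝ, 0 ≤ C ∧ ∀ x ∈ Set.Icc (0:ℝ) 1, |π x| ≤ C ∧ |w x| ≤ C := by
  obtain ⟨C1, hC1⟩ := isCompact_Icc.exists_bound_of_continuousOn hπc
  obtain ⟨C2, hC2⟩ := isCompact_Icc.exists_bound_of_continuousOn hwc
  refine ⟨max C1 C2 ⊔ 0, le_max_right _ _, fun x hx => ⟨?_, ?_⟩⟩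
  · exact le_trans (hC1 x hx) (le_trans (le_max_left C1 C2) (le_max_left _ 0))
  · exact le_trans (hC2 x hx) (le_trans (le_max_right C1 C2) (le_max_left _ 0))

lemma summable_g (h0 : 0 ≤ δ) (h1 : δ < 1)
    (hπc : ContinuousOn π (Set.Icc 0 1)) (hwc : ContinuousOn w (Set.Icc 0 1))
    (hu : ∀ t, u t ∈ Set.Icc (0:ℝ) 1) (t : ℕ) :
    Summable fun k => δ ^ k * (π (u (t + k)) + w (u (t + k))) := by
  obtain ⟨C, _, hC⟩ := exists_icc_bound hπc hwc
  apply sum_pow_mul_of_bounded h0 h1 (C := 2 * C)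
  intro k
  calc |π (u (t+k)) + w (u (t+k))| ≤ |π (u (t+k))| + |w (u (t+k))| := abs_add_le _ _
    _ ≤ 2 * C := by
        have := hC _ (hu (t+k)); linarith [this.1, this.2]

lemma Sval_rec (h0 : 0 ≤ δ) (h1 : δ < 1)
    (hπc : ContinuousOn π (Set.Icc 0 1)) (hwc : ContinuousOn w (Set.Icc 0 1))
    (hu : ∀ t, u t ∈ Set.Icc (0:ℝ) 1) (t : ℕ) :
    Sval δ π w u t = (π (u t) + w (u t)) + δ * Sval δ π w u (t + 1) := by
  unfold Sval
  exact tsum_shift_rec (f := fun n => π (u n) + w (u n)) (summable_g h0 h1 hπc hwc hu t)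

lemma Sval_bound (h0 : 0 ≤ δ) (h1 : δ < 1)
    (hπc : ContinuousOn π (Set.Icc 0 1)) (hwc : ContinuousOn w (Set.Icc 0 1))
    (hu : ∀ t, u t ∈ Set.Icc (0:ℝ) 1) :
    ∃ C : ℝ, 0 ≤ C ∧ ∀ t, |Sval δ π w u t| ≤ C := by
  obtain ⟨C, hC0, hC⟩ := exists_icc_bound hπc hwc
  refine ⟨2 * C / (1 - δ), div_nonneg (by linarith) (by linarith), fun t => ?_⟩
  apply tsum_pow_mul_bound h0 h1
  intro k
  calc |π (u (t+k)) + w (u (t+k))| ≤ |π (u (t+k))| + |w (u (t+k))| := abs_add_le _ _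
    _ ≤ 2 * C := by have := hC _ (hu (t+k)); linarith [this.1, this.2]

lemma summable_wp (h0 : 0 < δ) (h1 : δ < 1)
    (hwc : ContinuousOn w (Set.Icc 0 1))
    (hu : ∀ t, u t ∈ Set.Icc (0:ℝ) 1) (hp : Summable fun t => δ ^ t * p t) (t : ℕ) :
    Summable fun k => δ ^ k * (w (u (t + k)) + p (t + k)) := by
  obtain ⟨C, _, hC⟩ := exists_icc_bound hwc hwc
  have h1' : Summable fun k => δ ^ k * w (u (t + k)) :=
    sum_pow_mul_of_bounded h0.le h1 (C := C) (fun k => (hC _ (hu (t+k))).1)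
  have h2' : Summable fun k => δ ^ k * p (t + k) := shift_summable h0 hp t
  exact (h1'.add h2').congr (fun k => by ring)

lemma summable_pip (h0 : 0 < δ) (h1 : δ < 1)
    (hπc : ContinuousOn π (Set.Icc 0 1))
    (hu : ∀ t, u t ∈ Set.Icc (0:ℝ) 1) (hp : Summable fun t => δ ^ t * p t) (t : ℕ) :
    Summable fun k => δ ^ k * (π (u (t + k)) - p (t + k)) := by
  obtain ⟨C, _, hC⟩ := exists_icc_bound hπc hπc
  have h1' : Summable fun k => δ ^ k * π (u (t + k)) :=
    sum_pow_mul_of_bounded h0.le h1 (C := C) (fun k => (hC _ (hu (t+k))).1)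
  have h2' : Summable fun k => δ ^ k * p (t + k) := shift_summable h0 hp t
  exact (h1'.sub h2').congr (fun k => by ring)

lemma WVal_rec (h0 : 0 < δ) (h1 : δ < 1)
    (hwc : ContinuousOn w (Set.Icc 0 1))
    (hu : ∀ t, u t ∈ Set.Icc (0:ℝ) 1) (hp : Summable fun t => δ ^ t * p t) (t : ℕ) :
    WVal δ w u p t = (w (u t) + p t) + δ * WVal δ w u p (t + 1) := by
  unfold WVal
  exact tsum_shift_rec (f := fun n => w (u n) + p n) (summable_wp h0 h1 hwc hu hp t)

lemma PiVal_rec (h0 : 0 < δ) (h1 : δ < 1)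
    (hπc : ContinuousOn π (Set.Icc 0 1))
    (hu : ∀ t, u t ∈ Set.Icc (0:ℝ) 1) (hp : Summable fun t => δ ^ t * p t) (t : ℕ) :
    PiVal δ π u p t = (π (u t) - p t) + δ * PiVal δ π u p (t + 1) := by
  unfold PiVal
  exact tsum_shift_rec (f := fun n => π (u n) - p n) (summable_pip h0 h1 hπc hu hp t)

lemma PiVal_add_WVal (h0 : 0 < δ) (h1 : δ < 1)
    (hπc : ContinuousOn π (Set.Icc 0 1)) (hwc : ContinuousOn w (Set.Icc 0 1))
    (hu : ∀ t, u t ∈ Set.Icc (0:ℝ) 1) (hp : Summable fun t => δ ^ t * p t) (t : ℕ) :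
    PiVal δ π u p t + WVal δ w u p t = Sval δ π w u t := by
  unfold PiVal WVal Sval
  rw [← Summable.tsum_add (summable_pip h0 h1 hπc hu hp t) (summable_wp h0 h1 hwc hu hp t)]
  exact tsum_congr (fun k => by ring)

end ValueTools


/-- Slack in the relaxed (P-IC) constraint. -/
noncomputable def Dslack (δ : ℝ) (π w : ℝ → ℝ) (u : ℕ → ℝ) (t : ℕ) : ℝ :=
  Sval δ π w u (t + 1) - (π (u (t + 1)) + w (u t)) / (1 - δ)

section PayTools
variable {δ : ℝ} {π w : ℝ → ℝ} {u p : ℕ → ℝ}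

lemma payStar_zero : payStar δ w u 0 = 0 := by simp [payStar]

lemma payStar_succ (t : ℕ) : payStar δ w u (t + 1) = (w (u t) - w (u (t + 1))) / (1 - δ) := by
  simp [payStar]

lemma summable_payStar (h0 : 0 ≤ δ) (h1 : δ < 1)
    (hwc : ContinuousOn w (Set.Icc 0 1)) (hu : ∀ t, u t ∈ Set.Icc (0:ℝ) 1) :
    Summable fun t => δ ^ t * payStar δ w u t := by
  obtain ⟨C, hC0, hC⟩ := exists_icc_bound hwc hwc
  apply sum_pow_mul_of_bounded h0 h1 (C := 2 * C / (1 - δ))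
  intro k
  match k with
  | 0 => simp [payStar_zero]; exact div_nonneg (by linarith) (by linarith)
  | Nat.succ n =>
    rw [payStar_succ, abs_div, abs_of_pos (by linarith : (0:ℝ) < 1 - δ)]
    apply div_le_div_of_nonneg_right _ (by linarith)
    · calc |w (u n) - w (u (n+1))| ≤ |w (u n)| + |w (u (n+1))| := abs_sub _ _
        _ ≤ 2 * C := by
          have h1 := (hC _ (hu n)).1; have h2 := (hC _ (hu (n+1))).1; linarith

lemma WVal_payStar_succ (h0 : 0 < δ) (h1 : δ < 1)
    (hwc : ContinuousOn w (Set.Icc 0 1)) (hu : ∀ t, u t ∈ Set.Icc (0:ℝ) 1) (t : ℕ) :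
    WVal δ w u (payStar δ w u) (t + 1) = w (u t) / (1 - δ) := by
  have hps := summable_payStar h0.le h1 hwc hu
  have hδ1 : (1 : ℝ) - δ ≠ 0 := by linarith
  set φ : ℕ → ℝ := fun t => WVal δ w u (payStar δ w u) (t + 1) - w (u t) / (1 - δ) with hφ
  have hb : ∃ C, ∀ t, |φ t| ≤ C := by
    obtain ⟨C, hC0, hC⟩ := exists_icc_bound hwc hwc
    refine ⟨(C + 2 * C / (1 - δ)) / (1 - δ) + C / (1 - δ), fun t => ?_⟩
    have hW : |WVal δ w u (payStar δ w u) (t + 1)| ≤ (C + 2 * C / (1 - δ)) / (1 - δ) := by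
      apply tsum_pow_mul_bound h0.le h1
      intro k
      calc |w (u (t + 1 + k)) + payStar δ w u (t + 1 + k)|
          ≤ |w (u (t + 1 + k))| + |payStar δ w u (t + 1 + k)| := abs_add_le _ _
        _ ≤ C + 2 * C / (1 - δ) := by
            have hw1 := (hC _ (hu (t + 1 + k))).1
            have hp1 : |payStar δ w u (t + 1 + k)| ≤ 2 * C / (1 - δ) := by
              rw [show t + 1 + k = (t + k) + 1 by omega, payStar_succ, abs_div,
                abs_of_pos (by linarith : (0:ℝ) < 1 - δ)]
              apply div_le_div_of_nonneg_right _ (by linarith)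
              calc |w (u (t+k)) - w (u (t+k+1))| ≤ |w (u (t+k))| + |w (u (t+k+1))| := abs_sub _ _
                _ ≤ 2 * C := by
                  have x1 := (hC _ (hu (t+k))).1; have x2 := (hC _ (hu (t+k+1))).1; linarith
            linarith
    have hw2 : |w (u t) / (1 - δ)| ≤ C / (1 - δ) := by
      rw [abs_div, abs_of_pos (by linarith : (0:ℝ) < 1 - δ)]
      exact div_le_div_of_nonneg_right (hC _ (hu t)).1 (by linarith)
    calc |φ t| ≤ |WVal δ w u (payStar δ w u) (t + 1)| + |w (u t) / (1 - δ)| := abs_sub _ _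
      _ ≤ _ := by linarith
  obtain ⟨C, hb⟩ := hb
  have hr : ∀ t, φ t = δ * φ (t + 1) := by
    intro t
    have hrec := WVal_rec h0 h1 hwc hu hps (t + 1)
    simp only [hφ]
    rw [hrec, payStar_succ]
    field_simp
    ring
  have := decay_zero h0 h1 hb hr t
  simp only [hφ] at this
  linarith

lemma WVal_payStar_zero (h0 : 0 < δ) (h1 : δ < 1)
    (hwc : ContinuousOn w (Set.Icc 0 1)) (hu : ∀ t, u t ∈ Set.Icc (0:ℝ) 1) :
    WVal δ w u (payStar δ w u) 0 = w (u 0) / (1 - δ) := by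
  have hps := summable_payStar h0.le h1 hwc hu
  rw [WVal_rec h0 h1 hwc hu hps 0, WVal_payStar_succ h0 h1 hwc hu 0, payStar_zero]
  have hδ1 : (1 : ℝ) - δ ≠ 0 := by linarith
  field_simp
  ring

end PayTools

section SlackTools
variable {δ : ℝ} {π w : ℝ → ℝ} {u : ℕ → ℝ}

lemma Dslack_rec (h0 : 0 < δ) (h1 : δ < 1)
    (hπc : ContinuousOn π (Set.Icc 0 1)) (hwc : ContinuousOn w (Set.Icc 0 1))
    (hu : ∀ t, u t ∈ Set.Icc (0:ℝ) 1) (t : ℕ) :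
    Dslack δ π w u t - δ * Dslack δ π w u (t + 1) =
      (δ * (π (u (t + 2)) - π (u (t + 1))) - (w (u t) - w (u (t + 1)))) / (1 - δ) := by
  have hδ1 : (1 : ℝ) - δ ≠ 0 := by linarith
  unfold Dslack
  rw [Sval_rec h0.le h1 hπc hwc hu (t + 1)]
  have : t + 1 + 1 = t + 2 := rfl
  rw [this]
  field_simp
  ring

lemma Dslack_bound (h0 : 0 < δ) (h1 : δ < 1)
    (hπc : ContinuousOn π (Set.Icc 0 1)) (hwc : ContinuousOn w (Set.Icc 0 1))
    (hu : ∀ t, u t ∈ Set.Icc (0:ℝ) 1) :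
    ∃ C, ∀ t, |Dslack δ π w u t| ≤ C := by
  obtain ⟨C1, hC10, hC1⟩ := Sval_bound h0.le h1 hπc hwc hu
  obtain ⟨C, hC0, hC⟩ := exists_icc_bound hπc hwc
  refine ⟨C1 + 2 * C / (1 - δ), fun t => ?_⟩
  unfold Dslack
  have h2 : |(π (u (t + 1)) + w (u t)) / (1 - δ)| ≤ 2 * C / (1 - δ) := by
    rw [abs_div, abs_of_pos (by linarith : (0:ℝ) < 1 - δ)]
    apply div_le_div_of_nonneg_right _ (by linarith)
    calc |π (u (t+1)) + w (u t)| ≤ |π (u (t+1))| + |w (u t)| := abs_add_le _ _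
      _ ≤ 2 * C := by
        have x1 := (hC _ (hu (t+1))).1; have x2 := (hC _ (hu t)).2; linarith
  calc |Sval δ π w u (t + 1) - (π (u (t + 1)) + w (u t)) / (1 - δ)|
      ≤ |Sval δ π w u (t + 1)| + |(π (u (t + 1)) + w (u t)) / (1 - δ)| := abs_sub _ _
    _ ≤ C1 + 2 * C / (1 - δ) := add_le_add (hC1 _) h2

lemma binding_of_BE (h0 : 0 < δ) (h1 : δ < 1)
    (hπc : ContinuousOn π (Set.Icc 0 1)) (hwc : ContinuousOn w (Set.Icc 0 1))
    (hu : ∀ t, u t ∈ Set.Icc (0:ℝ) 1) (hbe : BE δ π w u) :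
    ∀ t, Dslack δ π w u t = 0 := by
  obtain ⟨C, hC⟩ := Dslack_bound h0 h1 hπc hwc hu
  apply decay_zero h0 h1 hC
  intro t
  have hbte := hbe (t + 1) (by omega)
  simp only [Nat.add_sub_cancel] at hbte
  have := Dslack_rec h0 h1 hπc hwc hu t
  rw [show t + 1 + 1 = t + 2 from rfl] at hbte
  rw [hbte] at this
  simp at this
  linarith

lemma BE_of_binding (h0 : 0 < δ) (h1 : δ < 1)
    (hπc : ContinuousOn π (Set.Icc 0 1)) (hwc : ContinuousOn w (Set.Icc 0 1))
    (hu : ∀ t, u t ∈ Set.Icc (0:ℝ) 1) (hbind : ∀ t, Dslack δ π w u t = 0) :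
    BE δ π w u := by
  intro t ht
  obtain ⟨k, rfl⟩ : ∃ k, t = k + 1 := ⟨t - 1, by omega⟩
  have := Dslack_rec h0 h1 hπc hwc hu k
  rw [hbind k, hbind (k + 1)] at this
  have hδ1 : (0 : ℝ) < 1 - δ := by linarith
  simp only [Nat.add_sub_cancel]
  have h2 : (δ * (π (u (k + 2)) - π (u (k + 1))) - (w (u k) - w (u (k + 1)))) = 0 := by
    field_simp at this
    linarith
  rw [show k + 1 + 1 = k + 2 from rfl]
  linarith

/-- Binding constraint value: `S_{t+1} = (π(u_{t+1}) + w(u_t))/(1−δ)`. -/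
lemma Sval_of_binding {t : ℕ} (hb : Dslack δ π w u t = 0) :
    Sval δ π w u (t + 1) = (π (u (t + 1)) + w (u t)) / (1 - δ) := by
  unfold Dslack at hb; linarith

end SlackTools


section Bridge
variable {δ : ℝ} {π w : ℝ → ℝ} {u p : ℕ → ℝ}

lemma feas_of_implementable (h0 : 0 < δ) (h1 : δ < 1)
    (hπc : ContinuousOn π (Set.Icc 0 1)) (hwc : ContinuousOn w (Set.Icc 0 1))
    (h : Implementable δ π w u p) : Feas δ π w u := by
  obtain ⟨⟨hu, hu0, hp⟩, hmono, hpos, hPIC, hEIC⟩ := h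
  refine ⟨hu, hu0, hmono, fun t => ?_⟩
  have h2 := PiVal_add_WVal h0 h1 hπc hwc hu hp (t + 1)
  have h3 := hPIC (t + 1)
  have h4 := hEIC t
  rw [add_div]
  linarith

lemma PiVal_payStar_eq (h0 : 0 < δ) (h1 : δ < 1)
    (hπc : ContinuousOn π (Set.Icc 0 1)) (hwc : ContinuousOn w (Set.Icc 0 1))
    (hu : ∀ t, u t ∈ Set.Icc (0:ℝ) 1) :
    PiVal δ π u (payStar δ w u) 0 = Sval δ π w u 0 - w (u 0) / (1 - δ) := by
  have := PiVal_add_WVal h0 h1 hπc hwc hu (summable_payStar h0.le h1 hwc hu) 0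
  rw [WVal_payStar_zero h0 h1 hwc hu] at this
  linarith

lemma PiVal_payStar_succ (h0 : 0 < δ) (h1 : δ < 1)
    (hπc : ContinuousOn π (Set.Icc 0 1)) (hwc : ContinuousOn w (Set.Icc 0 1))
    (hu : ∀ t, u t ∈ Set.Icc (0:ℝ) 1) (t : ℕ) :
    PiVal δ π u (payStar δ w u) (t + 1) = Sval δ π w u (t + 1) - w (u t) / (1 - δ) := by
  have := PiVal_add_WVal h0 h1 hπc hwc hu (summable_payStar h0.le h1 hwc hu) (t + 1)
  rw [WVal_payStar_succ h0 h1 hwc hu t] at this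
  linarith

lemma implementable_payStar (h0 : 0 < δ) (h1 : δ < 1)
    (hπc : ContinuousOn π (Set.Icc 0 1)) (hwc : ContinuousOn w (Set.Icc 0 1))
    (hπm : StrictMonoOn π (Set.Icc 0 1)) (hwa : StrictAntiOn w (Set.Icc 0 1))
    (hF : Feas δ π w u) : Implementable δ π w u (payStar δ w u) := by
  obtain ⟨hu, hu0, hmono, hcon⟩ := hF
  have hD : (0:ℝ) < 1 - δ := by linarith
  refine ⟨⟨hu, hu0, summable_payStar h0.le h1 hwc hu⟩, hmono, ?_, ?_, ?_⟩
  · intro t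
    match t with
    | 0 => simp [payStar_zero]
    | Nat.succ n =>
      rw [payStar_succ]
      apply div_nonneg _ hD.le
      have : w (u (n + 1)) ≤ w (u n) :=
        hwa.antitoneOn (hu n) (hu (n + 1)) (hmono (Nat.le_succ n))
      linarith
  · intro t
    match t with
    | 0 =>
      rw [PiVal_payStar_eq h0 h1 hπc hwc hu,
        Sval_rec h0.le h1 hπc hwc hu 0]
      have hS1 := hcon 0
      have hA : π (u 0) ≤ π (u 1) := hπm.monotoneOn (hu 0) (hu 1) (hmono (by omega))
      have e1 : π (u 0) + w (u 0) + δ * ((π (u 1) + w (u 0)) / (1 - δ)) - w (u 0) / (1 - δ)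
          = π (u 0) / (1 - δ) + δ * (π (u 1) - π (u 0)) / (1 - δ) := by
        field_simp
        ring
      have e2 : 0 ≤ δ * (π (u 1) - π (u 0)) / (1 - δ) := by
        apply div_nonneg _ hD.le
        have : 0 ≤ π (u 1) - π (u 0) := by linarith
        positivity
      have e3 : δ * Sval δ π w u 1 ≥ δ * ((π (u 1) + w (u 0)) / (1 - δ)) :=
        mul_le_mul_of_nonneg_left (by simpa using hS1) h0.le
      rw [show (0:ℕ) + 1 = 1 from rfl] at *
      linarith
    | Nat.succ n =>
      rw [PiVal_payStar_succ h0 h1 hπc hwc hu n]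
      have := hcon n
      rw [add_div] at this
      linarith
  · intro t
    rw [WVal_payStar_succ h0 h1 hwc hu t]

lemma PiVal_le_sval (h0 : 0 < δ) (h1 : δ < 1)
    (hπc : ContinuousOn π (Set.Icc 0 1)) (hwc : ContinuousOn w (Set.Icc 0 1))
    (h : Implementable δ π w u p) :
    PiVal δ π u p 0 ≤ Sval δ π w u 0 - w (u 0) / (1 - δ) := by
  obtain ⟨⟨hu, hu0, hp⟩, hmono, hpos, hPIC, hEIC⟩ := h
  have hD : (0:ℝ) < 1 - δ := by linarith
  have hW0 : w (u 0) / (1 - δ) ≤ WVal δ w u p 0 := by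
    rw [WVal_rec h0 h1 hwc hu hp 0]
    have h4 := hEIC 0
    have h5 := hpos 0
    have e1 : w (u 0) / (1 - δ) = w (u 0) + δ * (w (u 0) / (1 - δ)) := by
      field_simp; ring
    have e3 : δ * (w (u 0) / (1 - δ)) ≤ δ * WVal δ w u p 1 :=
      mul_le_mul_of_nonneg_left (by simpa using h4) h0.le
    rw [show (0:ℕ) + 1 = 1 from rfl] at *
    linarith
  have := PiVal_add_WVal h0 h1 hπc hwc hu hp 0
  linarith

lemma PiVal_payStar_of_binding (h0 : 0 < δ) (h1 : δ < 1)
    (hπc : ContinuousOn π (Set.Icc 0 1)) (hwc : ContinuousOn w (Set.Icc 0 1))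
    (hu : ∀ t, u t ∈ Set.Icc (0:ℝ) 1) (hb : Dslack δ π w u 0 = 0) :
    PiVal δ π u (payStar δ w u) 0 = π (u 0) + δ * π (u 1) / (1 - δ) := by
  have hD : (0:ℝ) < 1 - δ := by linarith
  rw [PiVal_payStar_eq h0 h1 hπc hwc hu, Sval_rec h0.le h1 hπc hwc hu 0,
    Sval_of_binding hb]
  rw [show (0:ℕ) + 1 = 1 from rfl]
  field_simp
  ring

end Bridge

section MonoBE
variable {δ : ℝ} {π w : ℝ → ℝ} {u : ℕ → ℝ}

lemma mono_of_BE (h0 : 0 < δ)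
    (hπm : StrictMonoOn π (Set.Icc 0 1)) (hwa : StrictAntiOn w (Set.Icc 0 1))
    (hu : ∀ t, u t ∈ Set.Icc (0:ℝ) 1) (hu0 : u 0 = 0) (hbe : BE δ π w u) :
    Monotone u := by
  have key : ∀ t, u t ≤ u (t + 1) := by
    intro t
    induction t with
    | zero => rw [hu0]; exact (hu 1).1
    | succ n ih =>
      have hbn := hbe (n + 1) (by omega)
      simp only [Nat.add_sub_cancel] at hbn
      have hw : w (u (n + 1)) ≤ w (u n) := hwa.antitoneOn (hu n) (hu (n + 1)) ih
      by_contra hcon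
      push_neg at hcon
      have : π (u (n + 1 + 1)) < π (u (n + 1)) := hπm (hu _) (hu _) hcon
      nlinarith
  exact monotone_nat_of_le_succ key

lemma Sval_congr {π' w' : ℝ → ℝ} (hu : ∀ t, u t ∈ Set.Icc (0:ℝ) 1)
    (hπ : ∀ x ∈ Set.Icc (0:ℝ) 1, π' x = π x) (hw : ∀ x ∈ Set.Icc (0:ℝ) 1, w' x = w x)
    (t : ℕ) : Sval δ π' w' u t = Sval δ π w u t := by
  unfold Sval
  exact tsum_congr fun k => by rw [hπ _ (hu (t + k)), hw _ (hu (t + k))]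

lemma Feas_congr {π' w' : ℝ → ℝ}
    (hπ : ∀ x ∈ Set.Icc (0:ℝ) 1, π' x = π x) (hw : ∀ x ∈ Set.Icc (0:ℝ) 1, w' x = w x) :
    ∀ x, (Feas δ π' w' x ↔ Feas δ π w x) := by
  intro x
  constructor <;> intro ⟨hu, hu0, hmono, hcon⟩ <;> refine ⟨hu, hu0, hmono, fun t => ?_⟩
  · rw [← hπ _ (hu (t+1)), ← hw _ (hu t), ← Sval_congr hu hπ hw (t+1)]
    exact hcon t
  · rw [hπ _ (hu (t+1)), hw _ (hu t), Sval_congr hu hπ hw (t+1)]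
    exact hcon t

end MonoBE

section Existence
variable {δ : ℝ} {π w : ℝ → ℝ}

/-- clamp to [0,1] -/
noncomputable def clmp (x : ℝ) : ℝ := max 0 (min x 1)

lemma clmp_continuous : Continuous clmp :=
  continuous_const.max (continuous_id.min continuous_const)

lemma clmp_mem (x : ℝ) : clmp x ∈ Set.Icc (0:ℝ) 1 := by
  constructor
  · exact le_max_left _ _
  · exact max_le (by norm_num) (min_le_right _ _)

lemma clmp_eq {x : ℝ} (hx : x ∈ Set.Icc (0:ℝ) 1) : clmp x = x := by
  unfold clmp
  rw [min_eq_left hx.2, max_eq_right hx.1]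

lemma exists_maximizer (h0 : 0 < δ) (h1 : δ < 1)
    (hπc : ContinuousOn π (Set.Icc 0 1)) (hwc : ContinuousOn w (Set.Icc 0 1)) :
    ∃ v, Feas δ π w v ∧ ∀ x, Feas δ π w x → Sval δ π w x 0 ≤ Sval δ π w v 0 := by
  set π' : ℝ → ℝ := fun x => π (clmp x) with hπ'def
  set w' : ℝ → ℝ := fun x => w (clmp x) with hw'def
  have hπ'c : Continuous π' := hπc.comp_continuous clmp_continuous clmp_mem
  have hw'c : Continuous w' := hwc.comp_continuous clmp_continuous clmp_mem
  have hπeq : ∀ x ∈ Set.Icc (0:ℝ) 1, π' x = π x := fun x hx => by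
    simp only [hπ'def, clmp_eq hx]
  have hweq : ∀ x ∈ Set.Icc (0:ℝ) 1, w' x = w x := fun x hx => by
    simp only [hw'def, clmp_eq hx]
  obtain ⟨C, hC0, hC⟩ := exists_icc_bound hπc hwc
  have hbnd : ∀ x : ℝ, |π' x| ≤ C ∧ |w' x| ≤ C := fun x => hC _ (clmp_mem x)
  -- continuity of the value function
  have hSc : ∀ t, Continuous (fun x : ℕ → ℝ => Sval δ π' w' x t) := by
    intro t
    apply continuous_tsum
      (u := fun k => δ ^ k * (2 * C))
      (fun k => continuous_const.mul (((hπ'c.comp (continuous_apply (t + k)))).add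
        (hw'c.comp (continuous_apply (t + k)))))
      ((summable_geometric_of_lt_one h0.le h1).mul_right _)
    intro k x
    change ‖δ ^ k * (π' (x (t+k)) + w' (x (t+k)))‖ ≤ δ ^ k * (2 * C)
    rw [Real.norm_eq_abs, abs_mul, abs_pow, abs_of_nonneg h0.le]
    apply mul_le_mul_of_nonneg_left _ (pow_nonneg h0.le k)
    calc |π' (x (t+k)) + w' (x (t+k))| ≤ |π' (x (t+k))| + |w' (x (t+k))| := abs_add_le _ _
      _ ≤ 2 * C := by have := hbnd (x (t+k)); linarith [this.1, this.2]
  -- the feasible set is compact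
  set F : Set (ℕ → ℝ) := {x | Feas δ π' w' x} with hFdef
  have hK : IsCompact {x : ℕ → ℝ | ∀ t, x t ∈ Set.Icc (0:ℝ) 1} := by
    have : {x : ℕ → ℝ | ∀ t, x t ∈ Set.Icc (0:ℝ) 1}
        = Set.pi Set.univ (fun _ : ℕ => Set.Icc (0:ℝ) 1) := by
      ext x; simp [Set.mem_pi, Pi.le_def, forall_and]
    rw [this]
    exact isCompact_univ_pi fun _ => isCompact_Icc
  have hFclosed : IsClosed F := by
    have : F = (⋂ t, {x : ℕ → ℝ | x t ∈ Set.Icc (0:ℝ) 1}) ∩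
        ({x : ℕ → ℝ | x 0 = 0} ∩ ((⋂ t, {x : ℕ → ℝ | x t ≤ x (t+1)}) ∩
        (⋂ t, {x : ℕ → ℝ | (π' (x (t + 1)) + w' (x t)) / (1 - δ) ≤ Sval δ π' w' x (t+1)}))) := by
      ext x
      simp only [hFdef, Feas, Set.mem_inter_iff, Set.mem_iInter, Set.mem_setOf_eq]
      constructor
      · rintro ⟨a, b, c, d⟩
        exact ⟨fun t => a t, b, fun t => c (Nat.le_succ t), fun t => d t⟩
      · rintro ⟨a, b, c, d⟩
        exact ⟨a, b, monotone_nat_of_le_succ c, d⟩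
    rw [this]
    refine IsClosed.inter (isClosed_iInter fun t => isClosed_Icc.preimage (continuous_apply t))
      (IsClosed.inter (isClosed_eq (continuous_apply 0) continuous_const)
        (IsClosed.inter (isClosed_iInter fun t =>
            isClosed_le (continuous_apply t) (continuous_apply (t+1)))
          (isClosed_iInter fun t => isClosed_le
            (by fun_prop)
            (hSc (t+1)))))
  have hFsub : F ⊆ {x : ℕ → ℝ | ∀ t, x t ∈ Set.Icc (0:ℝ) 1} := fun x hx => hx.1
  have hFcompact : IsCompact F := hK.of_isClosed_subset hFclosed hFsub
  have hne : F.Nonempty := by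
    refine ⟨fun _ => 0, ⟨fun t => ⟨le_refl 0, by norm_num⟩, rfl, monotone_const, fun t => ?_⟩⟩
    have : Sval δ π' w' (fun _ => 0) (t+1) = (π' 0 + w' 0) * (1 - δ)⁻¹ := by
      unfold Sval
      rw [tsum_mul_right, tsum_geometric_of_lt_one h0.le h1]
      ring
    rw [this, div_eq_mul_inv]
  obtain ⟨v, hvF, hmax⟩ := hFcompact.exists_isMaxOn hne ((hSc 0).continuousOn)
  rw [isMaxOn_iff] at hmax
  refine ⟨v, (Feas_congr hπeq hweq v).1 hvF, fun x hx => ?_⟩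
  have hxF : x ∈ F := (Feas_congr hπeq hweq x).2 hx
  have := hmax x hxF
  rwa [Sval_congr hx.1 hπeq hweq 0, Sval_congr hvF.1 hπeq hweq 0] at this
end Existence

section Improve
variable {δ : ℝ} {π w : ℝ → ℝ} {v : ℕ → ℝ} {x : ℝ}

lemma update_mem_icc (hv : ∀ t, v t ∈ Set.Icc (0:ℝ) 1) (hx : x ∈ Set.Icc (0:ℝ) 1) (j : ℕ) :
    ∀ t, Function.update v j x t ∈ Set.Icc (0:ℝ) 1 := by
  intro t
  by_cases h : t = j
  · subst h; rw [Function.update_self]; exact hx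
  · rw [Function.update_of_ne h]; exact hv t

lemma Sval_update (h0 : 0 < δ) (h1 : δ < 1)
    (hπc : ContinuousOn π (Set.Icc 0 1)) (hwc : ContinuousOn w (Set.Icc 0 1))
    (hv : ∀ t, v t ∈ Set.Icc (0:ℝ) 1) (hx : x ∈ Set.Icc (0:ℝ) 1) (j τ : ℕ) :
    Sval δ π w (Function.update v j x) τ = Sval δ π w v τ +
      (if τ ≤ j then δ ^ (j - τ) * ((π x + w x) - (π (v j) + w (v j))) else 0) := by
  have hu := update_mem_icc hv hx j
  have s1 := summable_g h0.le h1 hπc hwc hu τ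
  have s2 := summable_g h0.le h1 hπc hwc hv τ
  have hsub : Sval δ π w (Function.update v j x) τ - Sval δ π w v τ =
      ∑' k : ℕ, (δ ^ k * (π (Function.update v j x (τ + k)) + w (Function.update v j x (τ + k)))
        - δ ^ k * (π (v (τ + k)) + w (v (τ + k)))) := by
    rw [Summable.tsum_sub s1 s2]; rfl
  have hzero : ∀ k : ℕ, τ + k ≠ j →
      (δ ^ k * (π (Function.update v j x (τ + k)) + w (Function.update v j x (τ + k)))
        - δ ^ k * (π (v (τ + k)) + w (v (τ + k)))) = 0 := by
    intro k hk
    rw [Function.update_of_ne hk]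
    ring
  by_cases hle : τ ≤ j
  · have hval : ∑' k : ℕ, (δ ^ k * (π (Function.update v j x (τ + k)) + w (Function.update v j x (τ + k)))
        - δ ^ k * (π (v (τ + k)) + w (v (τ + k))))
        = δ ^ (j - τ) * ((π x + w x) - (π (v j) + w (v j))) := by
      rw [tsum_eq_single (j - τ) (fun k hk => hzero k (by omega))]
      rw [show τ + (j - τ) = j by omega, Function.update_self]
      ring
    rw [if_pos hle]
    linarith [hsub, hval]
  · have hval : ∑' k : ℕ, (δ ^ k * (π (Function.update v j x (τ + k)) + w (Function.update v j x (τ + k)))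
        - δ ^ k * (π (v (τ + k)) + w (v (τ + k)))) = 0 := by
      have : ∀ k : ℕ, (δ ^ k * (π (Function.update v j x (τ + k)) + w (Function.update v j x (τ + k)))
        - δ ^ k * (π (v (τ + k)) + w (v (τ + k)))) = 0 := fun k => hzero k (by omega)
      rw [tsum_congr this, tsum_zero]
    rw [if_neg hle]
    linarith [hsub, hval]

lemma maximizer_binding (h0 : 0 < δ) (h1 : δ < 1)
    (hπc : ContinuousOn π (Set.Icc 0 1)) (hwc : ContinuousOn w (Set.Icc 0 1))
    (hπm : StrictMonoOn π (Set.Icc 0 1)) (hwa : StrictAntiOn w (Set.Icc 0 1))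
    (hGm : StrictMonoOn (fun y => π y + w y) (Set.Icc 0 1))
    (hvF : Feas δ π w v)
    (hmax : ∀ x, Feas δ π w x → Sval δ π w x 0 ≤ Sval δ π w v 0) :
    ∀ t, Dslack δ π w v t = 0 := by
  obtain ⟨hv, hv0, hmono, hcon⟩ := hvF
  have hD : (0:ℝ) < 1 - δ := by linarith
  have hDpos : ∀ t, 0 ≤ Dslack δ π w v t := by
    intro t; unfold Dslack; linarith [hcon t]
  by_contra hcontra
  push_neg at hcontra
  obtain ⟨t0, ht0⟩ := hcontra
  have hDt0 : 0 < Dslack δ π w v t0 := lt_of_le_of_ne (hDpos t0) (Ne.symm ht0)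
  -- Step 1: find an index with positive BE residual
  have step1 : ∃ m : ℕ, 0 < δ * (π (v (m + 2)) - π (v (m + 1))) - (w (v m) - w (v (m + 1))) := by
    by_contra hno
    push_neg at hno
    have hstep : ∀ m, Dslack δ π w v m ≤ δ * Dslack δ π w v (m + 1) := by
      intro m
      have hrec := Dslack_rec h0 h1 hπc hwc hv m
      have : (δ * (π (v (m + 2)) - π (v (m + 1))) - (w (v m) - w (v (m + 1)))) / (1 - δ) ≤ 0 :=
        div_nonpos_of_nonpos_of_nonneg (hno m) hD.le
      linarith
    have hiter : ∀ k, Dslack δ π w v t0 ≤ δ ^ k * Dslack δ π w v (t0 + k) := by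
      intro k
      induction k with
      | zero => simp
      | succ n ih =>
        calc Dslack δ π w v t0 ≤ δ ^ n * Dslack δ π w v (t0 + n) := ih
          _ ≤ δ ^ n * (δ * Dslack δ π w v (t0 + n + 1)) :=
              mul_le_mul_of_nonneg_left (hstep _) (pow_nonneg h0.le n)
          _ = δ ^ (n + 1) * Dslack δ π w v (t0 + (n + 1)) := by
              rw [pow_succ]; ring_nf
    obtain ⟨C, hC⟩ := Dslack_bound h0 h1 hπc hwc hv
    have hle2 : ∀ k, Dslack δ π w v t0 ≤ δ ^ k * C := by
      intro k
      calc Dslack δ π w v t0 ≤ δ ^ k * Dslack δ π w v (t0 + k) := hiter k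
        _ ≤ δ ^ k * C := mul_le_mul_of_nonneg_left
            (le_trans (le_abs_self _) (hC _)) (pow_nonneg h0.le k)
    have hlim : Tendsto (fun k : ℕ => δ ^ k * C) atTop (nhds 0) := by
      simpa using (tendsto_pow_atTop_nhds_zero_of_lt_one h0.le h1).mul_const C
    have : Dslack δ π w v t0 ≤ 0 := ge_of_tendsto' hlim hle2
    linarith
  obtain ⟨m, hm⟩ := step1
  -- Step 2
  have hwm : w (v (m + 1)) ≤ w (v m) := hwa.antitoneOn (hv m) (hv (m+1)) (hmono (Nat.le_succ m))
  have hπlt : π (v (m + 1)) < π (v (m + 2)) := by nlinarith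
  have hab : v (m + 1) < v (m + 2) := by
    by_contra hc
    push_neg at hc
    rcases eq_or_lt_of_le hc with he | hlt
    · rw [he] at hπlt; linarith
    · have := hπm (hv (m+2)) (hv (m+1)) hlt; linarith
  have hDm : 0 < Dslack δ π w v m := by
    have hrec := Dslack_rec h0 h1 hπc hwc hv m
    have h2 : 0 < (δ * (π (v (m + 2)) - π (v (m + 1))) - (w (v m) - w (v (m + 1)))) / (1 - δ) :=
      div_pos hm hD
    have := hDpos (m + 1)
    nlinarith
  -- Step 3: pick the perturbation point
  have hIocsub : Set.Ioc (v (m+1)) (v (m+2)) ⊆ Set.Icc (0:ℝ) 1 := fun y hy =>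
    ⟨le_trans (hv (m+1)).1 hy.1.le, le_trans hy.2 (hv (m+2)).2⟩
  have hexists : ∃ x, x ∈ Set.Ioc (v (m+1)) (v (m+2)) ∧
      (w (v (m+1)) - w x) + (δ / (1 - δ)) * (π x - π (v (m+1))) < Dslack δ π w v m := by
    have hcw : ContinuousWithinAt
        (fun y => (w (v (m+1)) - w y) + (δ / (1 - δ)) * (π y - π (v (m+1))))
        (Set.Icc 0 1) (v (m+1)) :=
      (continuousWithinAt_const.sub (hwc _ (hv (m+1)))).add
        (continuousWithinAt_const.mul ((hπc _ (hv (m+1))).sub continuousWithinAt_const))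
    have htends : Tendsto
        (fun y => (w (v (m+1)) - w y) + (δ / (1 - δ)) * (π y - π (v (m+1))))
        (nhdsWithin (v (m+1)) (Set.Ioc (v (m+1)) (v (m+2)))) (nhds 0) := by
      have h3 := (hcw.mono hIocsub).tendsto
      simpa using h3
    haveI hNeBot : (nhdsWithin (v (m+1)) (Set.Ioc (v (m+1)) (v (m+2)))).NeBot := by
      rw [← mem_closure_iff_nhdsWithin_neBot, closure_Ioc (ne_of_lt hab)]
      exact ⟨le_refl _, hab.le⟩
    have hev := (htends.eventually_lt_const hDm).and
      (eventually_mem_nhdsWithin (s := Set.Ioc (v (m+1)) (v (m+2))) (a := v (m+1)))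
    obtain ⟨x, h1x, h2x⟩ := hev.exists
    exact ⟨x, h2x, h1x⟩
  obtain ⟨x, hxIoc, hxh⟩ := hexists
  have hxIcc : x ∈ Set.Icc (0:ℝ) 1 := hIocsub hxIoc
  have hΔpos : 0 < (π x + w x) - (π (v (m+1)) + w (v (m+1))) := by
    have h2 : π (v (m+1)) + w (v (m+1)) < π x + w x := hGm (hv (m+1)) hxIcc hxIoc.1
    linarith
  have hu : ∀ t, Function.update v (m+1) x t ∈ Set.Icc (0:ℝ) 1 := update_mem_icc hv hxIcc (m+1)
  have hSu : ∀ τ, Sval δ π w (Function.update v (m+1) x) τ = Sval δ π w v τ +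
      (if τ ≤ m+1 then δ ^ (m+1-τ) * ((π x + w x) - (π (v (m+1)) + w (v (m+1)))) else 0) :=
    Sval_update h0 h1 hπc hwc hv hxIcc (m+1)
  have huF : Feas δ π w (Function.update v (m+1) x) := by
    refine ⟨hu, ?_, ?_, ?_⟩
    · rw [Function.update_of_ne (by omega : (0:ℕ) ≠ m+1)]; exact hv0
    · apply monotone_nat_of_le_succ
      intro t
      rcases Nat.lt_trichotomy t m with hlt | heqm | hgt
      · rw [Function.update_of_ne (by omega : t ≠ m+1),
          Function.update_of_ne (by omega : t+1 ≠ m+1)]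
        exact hmono (Nat.le_succ t)
      · subst heqm
        rw [Function.update_of_ne (by omega : t ≠ t+1), Function.update_self]
        exact le_trans (hmono (Nat.le_succ t)) hxIoc.1.le
      · by_cases htj : t = m+1
        · subst htj
          rw [Function.update_self, Function.update_of_ne (by omega : m+1+1 ≠ m+1)]
          exact hxIoc.2
        · rw [Function.update_of_ne htj, Function.update_of_ne (by omega : t+1 ≠ m+1)]
          exact hmono (Nat.le_succ t)
    · intro t
      rcases Nat.lt_trichotomy t m with hlt | heqm | hgt
      · rw [Function.update_of_ne (by omega : t+1 ≠ m+1),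
          Function.update_of_ne (by omega : t ≠ m+1), hSu (t+1),
          if_pos (by omega : t+1 ≤ m+1)]
        have h2 : 0 ≤ δ ^ (m+1-(t+1)) * ((π x + w x) - (π (v (m+1)) + w (v (m+1)))) :=
          mul_nonneg (pow_nonneg h0.le _) hΔpos.le
        linarith [hcon t]
      · subst heqm
        rw [Function.update_self, Function.update_of_ne (by omega : t ≠ t+1), hSu (t+1),
          if_pos (le_refl (t+1)), Nat.sub_self, pow_zero, one_mul]
        have hDdef : Dslack δ π w v t = Sval δ π w v (t+1) - (π (v (t+1)) + w (v t)) / (1 - δ) := rfl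
        have e : Sval δ π w v (t+1) + ((π x + w x) - (π (v (t+1)) + w (v (t+1))))
              - (π x + w (v t)) / (1 - δ)
            = Dslack δ π w v t
              - ((w (v (t+1)) - w x) + (δ / (1 - δ)) * (π x - π (v (t+1)))) := by
          rw [hDdef]
          field_simp
          ring
        linarith [hxh, e]
      · by_cases htj : t = m+1
        · subst htj
          rw [Function.update_of_ne (by omega : m+1+1 ≠ m+1), Function.update_self,
            hSu (m+1+1), if_neg (by omega : ¬ m+1+1 ≤ m+1), add_zero]
          have hwx : w x ≤ w (v (m+1)) := (hwa (hv (m+1)) hxIcc hxIoc.1).le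
          have h3 := hcon (m+1)
          have h4 : (π (v (m+1+1)) + w x) / (1 - δ) ≤ (π (v (m+1+1)) + w (v (m+1))) / (1 - δ) :=
            (div_le_div_iff_of_pos_right hD).2 (by linarith)
          linarith
        · rw [Function.update_of_ne (by omega : t+1 ≠ m+1), Function.update_of_ne htj,
            hSu (t+1), if_neg (by omega : ¬ t+1 ≤ m+1), add_zero]
          exact hcon t
  have himp := hmax _ huF
  rw [hSu 0, if_pos (by omega : 0 ≤ m+1)] at himp
  have hpos2 : 0 < δ ^ (m+1-0) * ((π x + w x) - (π (v (m+1)) + w (v (m+1)))) :=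
    mul_pos (pow_pos h0 _) hΔpos
  linarith

end Improve



/-- Program equivalence: a contract is optimal iff p = p*(s), s satisfies (BE),
and s_1 is maximal among nondecreasing [0,1]-valued sequences with s'_0 = 0 satisfying (BE). -/
theorem optimal_iff_program
    (δ : ℝ) (hδ : δ ∈ Set.Ioo (0 : ℝ) 1) (π w : ℝ → ℝ)
    (hπc : ContinuousOn π (Set.Icc 0 1)) (hwc : ContinuousOn w (Set.Icc 0 1))
    (hπm : StrictMonoOn π (Set.Icc 0 1)) (hwa : StrictAntiOn w (Set.Icc 0 1))
    (hGm : StrictMonoOn (fun x => π x + w x) (Set.Icc 0 1))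
    (s p : ℕ → ℝ) (hc : IsContract δ s p) :
    Optimal δ π w s p ↔
      ((∀ t, p t = payStar δ w s t) ∧ BE δ π w s ∧
        ∀ s' : ℕ → ℝ, (∀ t, s' t ∈ Set.Icc (0 : ℝ) 1) → s' 0 = 0 → Monotone s' →
          BE δ π w s' → s' 1 ≤ s 1) := by
  obtain ⟨h0, h1⟩ := hδ
  have hD : (0:ℝ) < 1 - δ := by linarith
  obtain ⟨hsicc, hs0, hpsum⟩ := hc
  -- the global maximizer of the relaxed program
  obtain ⟨v, hvF, hvmax⟩ := exists_maximizer h0 h1 hπc hwc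
  have hvbind := maximizer_binding h0 h1 hπc hwc hπm hwa hGm hvF hvmax
  have hvBE : BE δ π w v := BE_of_binding h0 h1 hπc hwc hvF.1 hvbind
  have hvImp : Implementable δ π w v (payStar δ w v) :=
    implementable_payStar h0 h1 hπc hwc hπm hwa hvF
  have hvVal : PiVal δ π v (payStar δ w v) 0 = π (v 0) + δ * π (v 1) / (1 - δ) :=
    PiVal_payStar_of_binding h0 h1 hπc hwc hvF.1 (hvbind 0)
  have hvEq : PiVal δ π v (payStar δ w v) 0 = Sval δ π w v 0 - w (v 0) / (1 - δ) :=
    PiVal_payStar_eq h0 h1 hπc hwc hvF.1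
  have hv0 : v 0 = 0 := hvF.2.1
  constructor
  · rintro ⟨hImp, hopt⟩
    have hsF : Feas δ π w s := feas_of_implementable h0 h1 hπc hwc hImp
    have A1 : PiVal δ π s p 0 ≤ Sval δ π w s 0 - w (s 0) / (1 - δ) :=
      PiVal_le_sval h0 h1 hπc hwc hImp
    have A2 : Sval δ π w s 0 ≤ Sval δ π w v 0 := hvmax s hsF
    have A4 : PiVal δ π v (payStar δ w v) 0 ≤ PiVal δ π s p 0 := hopt v _ hvImp
    have hw00 : w (s 0) / (1 - δ) = w (v 0) / (1 - δ) := by rw [hs0, hv0]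
    -- equality chain
    have hSveq : Sval δ π w s 0 = Sval δ π w v 0 := by linarith [hvEq]
    have hPieq : PiVal δ π s p 0 = Sval δ π w s 0 - w (s 0) / (1 - δ) := by linarith [hvEq]
    -- s is itself a maximizer, hence BE
    have hsmax : ∀ x, Feas δ π w x → Sval δ π w x 0 ≤ Sval δ π w s 0 := by
      intro x hx; rw [hSveq]; exact hvmax x hx
    have hsbind := maximizer_binding h0 h1 hπc hwc hπm hwa hGm hsF hsmax
    have hsBE : BE δ π w s := BE_of_binding h0 h1 hπc hwc hsicc hsbind
    -- payments are pinned down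
    have hW : ∀ t, WVal δ w s p t = w (s (t - 1 + 0)) / (1 - δ) := by
      intro t
      match t with
      | 0 =>
        have := PiVal_add_WVal h0 h1 hπc hwc hsicc hpsum 0
        simp only [Nat.zero_sub, Nat.add_zero]
        linarith [hPieq]
      | Nat.succ n =>
        have hPIC := hImp.2.2.2.1 (n + 1)
        have hEIC := hImp.2.2.2.2 n
        have hsv := Sval_of_binding (hsbind n)
        have hvw := PiVal_add_WVal h0 h1 hπc hwc hsicc hpsum (n + 1)
        simp only [Nat.succ_sub_one, Nat.add_zero]
        rw [hsv, add_div] at hvw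
        linarith
    have hpeq : ∀ t, p t = payStar δ w s t := by
      intro t
      have hrec := WVal_rec h0 h1 hwc hsicc hpsum t
      match t with
      | 0 =>
        have e0 := hW 0
        have e1 := hW 1
        simp only [Nat.zero_sub, Nat.add_zero] at e0
        simp only [Nat.succ_sub_one, Nat.add_zero] at e1
        rw [e0, e1] at hrec
        rw [payStar_zero]
        have h3 : w (s 0) / (1 - δ) = w (s 0) + p 0 + δ * (w (s 0) / (1 - δ)) := by
          simpa using hrec
        have hkey : w (s 0) + δ * (w (s 0) / (1 - δ)) = w (s 0) / (1 - δ) := by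
          field_simp
          ring
        linarith
      | Nat.succ n =>
        have e0 := hW (n + 1)
        have e1 := hW (n + 2)
        simp only [Nat.succ_sub_one, Nat.add_zero] at e0 e1
        rw [e0, e1] at hrec
        rw [payStar_succ]
        have h2 : w (s n) / (1 - δ) = w (s (n+1)) + p (n+1) + δ * (w (s (n+1)) / (1 - δ)) := by
          simpa using hrec
        have hkey : w (s (n+1)) + δ * (w (s (n+1)) / (1 - δ)) = w (s (n+1)) / (1 - δ) := by
          field_simp
          ring
        have hkey3 : (w (s n) - w (s (n+1))) / (1 - δ) = w (s n) / (1 - δ) - w (s (n+1)) / (1 - δ) :=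
          sub_div _ _ _
        linarith
    refine ⟨hpeq, hsBE, ?_⟩
    -- maximality of s 1
    intro s' hs'icc hs'0 hs'mono hs'BE
    have hbind' := binding_of_BE h0 h1 hπc hwc hs'icc hs'BE
    have hs'F : Feas δ π w s' :=
      ⟨hs'icc, hs'0, hs'mono, fun t => le_of_eq (Sval_of_binding (hbind' t)).symm⟩
    have hImp' : Implementable δ π w s' (payStar δ w s') :=
      implementable_payStar h0 h1 hπc hwc hπm hwa hs'F
    have hval' : PiVal δ π s' (payStar δ w s') 0 = π (s' 0) + δ * π (s' 1) / (1 - δ) :=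
      PiVal_payStar_of_binding h0 h1 hπc hwc hs'icc (hbind' 0)
    have hvals : PiVal δ π s p 0 = π (s 0) + δ * π (s 1) / (1 - δ) := by
      have hpfun : p = payStar δ w s := funext hpeq
      rw [hpfun]
      exact PiVal_payStar_of_binding h0 h1 hπc hwc hsicc (hsbind 0)
    have hle := hopt s' _ hImp'
    rw [hval', hvals, hs'0, hs0] at hle
    have h6 : δ * π (s' 1) / (1 - δ) ≤ δ * π (s 1) / (1 - δ) := by linarith
    have h7 : δ * π (s' 1) ≤ δ * π (s 1) := (div_le_div_iff_of_pos_right hD).1 h6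
    have h8 : π (s' 1) ≤ π (s 1) := (mul_le_mul_iff_right₀ h0).1 h7
    by_contra hcc
    push_neg at hcc
    have := hπm (hsicc 1) (hs'icc 1) hcc
    linarith
  · rintro ⟨hpeq, hsBE, hmax1⟩
    have hpfun : p = payStar δ w s := funext hpeq
    have hsmono : Monotone s := mono_of_BE h0 hπm hwa hsicc hs0 hsBE
    have hsbind := binding_of_BE h0 h1 hπc hwc hsicc hsBE
    have hsF : Feas δ π w s :=
      ⟨hsicc, hs0, hsmono, fun t => le_of_eq (Sval_of_binding (hsbind t)).symm⟩
    have hImp : Implementable δ π w s p := by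
      rw [hpfun]; exact implementable_payStar h0 h1 hπc hwc hπm hwa hsF
    refine ⟨hImp, ?_⟩
    intro s' p' hImp'
    have hs'F : Feas δ π w s' := feas_of_implementable h0 h1 hπc hwc hImp'
    have B1 : PiVal δ π s' p' 0 ≤ Sval δ π w s' 0 - w (s' 0) / (1 - δ) :=
      PiVal_le_sval h0 h1 hπc hwc hImp'
    have B2 : Sval δ π w s' 0 ≤ Sval δ π w v 0 := hvmax s' hs'F
    have hv1 : v 1 ≤ s 1 := hmax1 v hvF.1 hvF.2.1 hvF.2.2.1 hvBE
    have hπv1 : π (v 1) ≤ π (s 1) := hπm.monotoneOn (hvF.1 1) (hsicc 1) hv1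
    have hvals : PiVal δ π s p 0 = π (s 0) + δ * π (s 1) / (1 - δ) := by
      rw [hpfun]
      exact PiVal_payStar_of_binding h0 h1 hπc hwc hsicc (hsbind 0)
    have hs'0 : s' 0 = 0 := hImp'.1.2.1
    have hw0' : w (s' 0) / (1 - δ) = w (v 0) / (1 - δ) := by rw [hs'0, hv0]
    have hπ0' : π (v 0) = π (s 0) := by rw [hv0, hs0]
    have h9 : δ * π (v 1) / (1 - δ) ≤ δ * π (s 1) / (1 - δ) := by
      apply (div_le_div_iff_of_pos_right hD).2
      exact mul_le_mul_of_nonneg_left hπv1 h0.le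
    linarith [hvEq, hvVal]
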